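/- Let Ω, ∂Ω, σ, n be as in the context. Let φ : ℝ^d → ℝ be C² on a neighborhood of the closure of Ω, satisfying −Δφ = E·φ on Ω and ∫_Ω φ(x)² dx = 1. Then ∫_{∂Ω} [ (d−2)·φ(x)·⟨n(x),∇φ(x)⟩ + ⟨x,n(x)⟩(E·φ(x)² − ‖∇φ(x)‖²) + 2·⟨x,∇φ(x)⟩·⟨n(x),∇φ(x)⟩ ] dσ(x) = 2E. (This normalization formula involves only boundary values and first derivatives of φ and requires no boundary conditions.) -/

import Mathlib

open MeasureTheory
open scoped RealInnerProductSpace Classical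

noncomputable section

/-- The Euclidean Laplacian: the sum of the second partial derivatives. -/
def lap {d : ℕ} (u : EuclideanSpace ℝ (Fin d) → ℝ) (x : EuclideanSpace ℝ (Fin d)) : ℝ :=
  ∑ i, fderiv ℝ (fun y => fderiv ℝ u y (EuclideanSpace.single i (1:ℝ))) x
    (EuclideanSpace.single i (1:ℝ))

/-- The divergence: the sum of the partial derivatives of the components. -/
def divg {d : ℕ} (F : EuclideanSpace ℝ (Fin d) → EuclideanSpace ℝ (Fin d))
    (x : EuclideanSpace ℝ (Fin d)) : ℝ :=
  ∑ i, fderiv ℝ (fun y => ⟪F y, EuclideanSpace.single i (1:ℝ)⟫) x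
    (EuclideanSpace.single i (1:ℝ))

/-- Evaluating a linear functional via sums against the standard basis. -/
lemma eucl_sum_apply_mul {d : ℕ} (L : EuclideanSpace ℝ (Fin d) →L[ℝ] ℝ)
    (v : EuclideanSpace ℝ (Fin d)) :
    ∑ i, L (EuclideanSpace.single i (1:ℝ)) * v i = L v := by
  have hv : ∑ i, v i • EuclideanSpace.single i (1:ℝ) = v := by
    have := (EuclideanSpace.basisFun (Fin d) ℝ).sum_repr v
    simpa [EuclideanSpace.basisFun_apply, EuclideanSpace.basisFun_repr] using this
  conv_rhs => rw [← hv]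
  rw [map_sum]
  simp [mul_comm]

lemma eucl_sum_inner_mul {d : ℕ} (w v : EuclideanSpace ℝ (Fin d)) :
    ∑ i, ⟪w, EuclideanSpace.single i (1:ℝ)⟫ * v i = ⟪w, v⟫ := by
  simpa using eucl_sum_apply_mul (innerSL ℝ w) v

lemma fderiv_mul_apply' {d : ℕ} {f g : EuclideanSpace ℝ (Fin d) → ℝ}
    {x v : EuclideanSpace ℝ (Fin d)} (hf : DifferentiableAt ℝ f x)
    (hg : DifferentiableAt ℝ g x) :
    fderiv ℝ (fun y => f y * g y) x v
      = fderiv ℝ f x v * g x + f x * fderiv ℝ g x v := by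
  rw [fderiv_fun_mul hf hg]
  simp [ContinuousLinearMap.add_apply, ContinuousLinearMap.smul_apply, smul_eq_mul]
  ring

theorem boundary_normalization_general
    (d : ℕ) (hd : 2 ≤ d) (Ω : Set (EuclideanSpace ℝ (Fin d)))
    (hΩo : IsOpen Ω) (hΩb : Bornology.IsBounded Ω)
    (n : EuclideanSpace ℝ (Fin d) → EuclideanSpace ℝ (Fin d))
    (hGG : ∀ F : EuclideanSpace ℝ (Fin d) → EuclideanSpace ℝ (Fin d),
      (∃ U, IsOpen U ∧ closure Ω ⊆ U ∧ ContDiffOn ℝ 1 F U) →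
      (∫ x in Ω, divg F x) = ∫ x in frontier Ω, ⟪F x, n x⟫ ∂(μH[(d:ℝ) - 1]))
    (φ : EuclideanSpace ℝ (Fin d) → ℝ) (En : ℝ)
    (hφr : ∃ U, IsOpen U ∧ closure Ω ⊆ U ∧ ContDiffOn ℝ 2 φ U)
    (hHφ : ∀ x ∈ Ω, -lap φ x = En * φ x)
    (hφnorm : (∫ x in Ω, (φ x) ^ 2) = 1) :
    (∫ x in frontier Ω,
        (((d : ℝ) - 2) * φ x * ⟪n x, gradient φ x⟫
          + ⟪x, n x⟫ * (En * (φ x) ^ 2 - ‖gradient φ x‖ ^ 2)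
          + 2 * ⟪x, gradient φ x⟫ * ⟪n x, gradient φ x⟫) ∂(μH[(d:ℝ) - 1]))
      = 2 * En := by
  classical
  obtain ⟨U, hUo, hUsub, hφU⟩ := hφr
  set g : EuclideanSpace ℝ (Fin d) → EuclideanSpace ℝ (Fin d) := fun y => gradient φ y with hgdef
  set F : EuclideanSpace ℝ (Fin d) → EuclideanSpace ℝ (Fin d) := fun y =>
    (((d:ℝ) - 2) * φ y) • g y + (En * (φ y)^2 - ⟪g y, g y⟫) • y
      + (2 * ⟪y, g y⟫) • g y with hFdef
  have hgcomp : g = fun y => (InnerProductSpace.toDual ℝ (EuclideanSpace ℝ (Fin d))).symm (fderiv ℝ φ y) := rfl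
  -- regularity of F
  have hφ1 : ContDiffOn ℝ 1 φ U := hφU.of_le one_le_two
  have hgU : ContDiffOn ℝ 1 g U := by
    have h1 : ContDiffOn ℝ 1 (fderiv ℝ φ) U := hφU.fderiv_of_isOpen hUo (by norm_num : (1:WithTop ℕ∞)+1 ≤ 2)
    rw [hgcomp]
    exact (InnerProductSpace.toDual ℝ (EuclideanSpace ℝ (Fin d))).symm.contDiff.comp_contDiffOn h1
  have hFU : ContDiffOn ℝ 1 F U := by
    refine ContDiffOn.add (ContDiffOn.add ?_ ?_) ?_
    · exact (contDiffOn_const.mul hφ1).smul hgU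
    · exact ((contDiffOn_const.mul (hφ1.pow 2)).sub (hgU.inner ℝ hgU)).smul contDiffOn_id
    · exact (contDiffOn_const.mul (contDiffOn_id.inner ℝ hgU)).smul hgU
  -- pointwise inner product with g
  have hginner : ∀ y v, ⟪g y, v⟫ = fderiv ℝ φ y v := by
    intro y v
    rw [hgcomp]
    exact InnerProductSpace.toDual_symm_apply
  -- divergence computation on Ω
  have hdiv : ∀ x ∈ Ω, divg F x = (2 * En) * (φ x)^2 := by
    intro x hx
    have hxU : U ∈ nhds x := hUo.mem_nhds (hUsub (subset_closure hx))
    have hφx : ContDiffAt ℝ 2 φ x := hφU.contDiffAt hxU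
    have hfd : ContDiffAt ℝ 1 (fderiv ℝ φ) x := hφx.fderiv_right (by norm_num : (1:WithTop ℕ∞)+1 ≤ 2)
    have hgx : ContDiffAt ℝ 1 g x := by
      rw [hgcomp]
      exact (InnerProductSpace.toDual ℝ (EuclideanSpace ℝ (Fin d))).symm.contDiff.contDiffAt.comp x hfd
    have hφd : DifferentiableAt ℝ φ x := hφx.differentiableAt two_ne_zero
    have hgd : DifferentiableAt ℝ g x := hgx.differentiableAt one_ne_zero
    set f'' := fderiv ℝ (fderiv ℝ φ) x with hf''def
    have hf''at : HasFDerivAt (fderiv ℝ φ) f'' x :=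
      (hfd.differentiableAt one_ne_zero).hasFDerivAt
    -- fderiv of g paired with a vector
    have hclm : ∀ w v, fderiv ℝ (fun y => fderiv ℝ φ y w) x v = f'' v w := by
      intro w v
      rw [fderiv_clm_apply (hfd.differentiableAt one_ne_zero) (differentiableAt_const w)]
      simp [hf''def]
    have hg' : ∀ v w, ⟪fderiv ℝ g x v, w⟫ = f'' v w := by
      intro v w
      have hfun : (fun y => ⟪g y, w⟫) = fun y => fderiv ℝ φ y w :=
        funext fun y => hginner y w
      have h1 : fderiv ℝ (fun y => ⟪g y, w⟫) x v = ⟪fderiv ℝ g x v, w⟫ := by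
        rw [fderiv_inner_apply ℝ hgd (differentiableAt_const w) v]
        simp
      rw [← h1, hfun, hclm]
    -- symmetry of the second derivative
    have hsymm : ∀ v w, f'' v w = f'' w v := by
      have heven : ∀ᶠ y in nhds x, HasFDerivAt φ (fderiv ℝ φ y) y := by
        filter_upwards [hxU] with y hy
        exact ((hφU.differentiableOn two_ne_zero).differentiableAt
          (hUo.mem_nhds hy)).hasFDerivAt
      exact fun v w => second_derivative_symmetric_of_eventually heven hf''at v w
    -- the laplacian in terms of f''
    have hlap : lap φ x = ∑ i, f'' (EuclideanSpace.single i (1:ℝ))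
        (EuclideanSpace.single i (1:ℝ)) := by
      unfold lap
      refine Finset.sum_congr rfl fun i _ => ?_
      exact hclm (EuclideanSpace.single i (1:ℝ)) (EuclideanSpace.single i (1:ℝ))
    have hlapval : (∑ i, f'' (EuclideanSpace.single i (1:ℝ))
        (EuclideanSpace.single i (1:ℝ))) = -(En * φ x) := by
      rw [← hlap]
      have := hHφ x hx
      linarith
    -- differentiability of the scalar atoms
    have hDp : ∀ c : EuclideanSpace ℝ (Fin d), DifferentiableAt ℝ (fun y => ⟪g y, c⟫) x :=
      fun c => hgd.inner ℝ (differentiableAt_const c)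
    have hDq : ∀ c : EuclideanSpace ℝ (Fin d), DifferentiableAt ℝ (fun y : EuclideanSpace ℝ (Fin d) => ⟪y, c⟫) x :=
      fun c => differentiableAt_fun_id.inner ℝ (differentiableAt_const c)
    have hDr : DifferentiableAt ℝ (fun y => ⟪g y, g y⟫) x := hgd.inner ℝ hgd
    have hDs : DifferentiableAt ℝ (fun y : EuclideanSpace ℝ (Fin d) => ⟪y, g y⟫) x :=
      differentiableAt_fun_id.inner ℝ hgd
    -- fderivs of the scalar atoms
    have hp' : ∀ c v, fderiv ℝ (fun y => ⟪g y, c⟫) x v = f'' v c := by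
      intro c v
      rw [fderiv_inner_apply ℝ hgd (differentiableAt_const c) v]
      simp [hg']
    have hq' : ∀ c v, fderiv ℝ (fun y : EuclideanSpace ℝ (Fin d) => ⟪y, c⟫) x v = ⟪v, c⟫ := by
      intro c v
      rw [fderiv_inner_apply ℝ differentiableAt_fun_id (differentiableAt_const c) v]
      simp [real_inner_comm]
    have hg'' : ∀ v w, ⟪w, fderiv ℝ g x v⟫ = f'' v w :=
      fun v w => by rw [real_inner_comm]; exact hg' v w
    have hr' : ∀ v, fderiv ℝ (fun y => ⟪g y, g y⟫) x v = 2 * f'' v (g x) := by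
      intro v
      rw [fderiv_inner_apply ℝ hgd hgd v]
      simp only [hg', hg'']
      ring
    have hs' : ∀ v, fderiv ℝ (fun y : EuclideanSpace ℝ (Fin d) => ⟪y, g y⟫) x v = ⟪v, g x⟫ + f'' v x := by
      intro v
      rw [fderiv_inner_apply ℝ differentiableAt_fun_id hgd v]
      simp only [hg', hg'', fderiv_id']
      simp [add_comm]
    have ha' : ∀ v, fderiv ℝ φ x v = ⟪g x, v⟫ := fun v => (hginner x v).symm
    -- the main pointwise derivative formula
    have hmain : ∀ c v : EuclideanSpace ℝ (Fin d), fderiv ℝ (fun y => ⟪F y, c⟫) x v =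
        (((d:ℝ)-2) * ⟪g x, v⟫) * ⟪g x, c⟫ + (((d:ℝ)-2) * φ x) * f'' v c
        + ((En * (2 * φ x * ⟪g x, v⟫) - 2 * f'' v (g x)) * ⟪x, c⟫
            + (En * (φ x)^2 - ⟪g x, g x⟫) * ⟪v, c⟫
          + ((2 * (⟪v, g x⟫ + f'' v x)) * ⟪g x, c⟫ + (2 * ⟪x, g x⟫) * f'' v c)) := by
      intro c v
      have e1 : (fun y => ⟪F y, c⟫)
          = fun y => (((d:ℝ)-2) * φ y) * ⟪g y, c⟫
            + ((En * (φ y)^2 - ⟪g y, g y⟫) * ⟪y, c⟫ + (2 * ⟪y, g y⟫) * ⟪g y, c⟫) := by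
        funext y
        simp only [hFdef, inner_add_left, real_inner_smul_left]
        ring
      rw [e1]
      have d1 : DifferentiableAt ℝ (fun y => (((d:ℝ)-2) * φ y) * ⟪g y, c⟫) x :=
        ((differentiableAt_const _).mul hφd).mul (hDp c)
      have d2 : DifferentiableAt ℝ (fun y => (En * (φ y)^2 - ⟪g y, g y⟫) * ⟪y, c⟫) x :=
        (((differentiableAt_const _).mul (hφd.pow 2)).sub hDr).mul (hDq c)
      have d3 : DifferentiableAt ℝ (fun y : EuclideanSpace ℝ (Fin d) => (2 * ⟪y, g y⟫) * ⟪g y, c⟫) x :=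
        ((differentiableAt_const _).mul hDs).mul (hDp c)
      rw [fderiv_fun_add d1 (d2.fun_add d3)]
      rw [ContinuousLinearMap.add_apply, fderiv_fun_add d2 d3, ContinuousLinearMap.add_apply]
      rw [fderiv_mul_apply' ((differentiableAt_const _).fun_mul hφd) (hDp c)]
      rw [fderiv_mul_apply' (((differentiableAt_const _).fun_mul (hφd.fun_pow 2)).fun_sub hDr) (hDq c)]
      rw [fderiv_mul_apply' ((differentiableAt_const _).fun_mul hDs) (hDp c)]
      rw [fderiv_const_mul hφd, fderiv_const_mul hDs]
      rw [fderiv_fun_sub ((differentiableAt_const _).fun_mul (hφd.fun_pow 2)) hDr]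
      rw [ContinuousLinearMap.sub_apply, fderiv_const_mul (hφd.fun_pow 2)]
      have hpow : fderiv ℝ (fun y => (φ y)^2) x v = 2 * φ x * fderiv ℝ φ x v := by
        have : (fun y => (φ y)^2) = fun y => φ y * φ y := by funext y; ring
        rw [this, fderiv_mul_apply' hφd hφd]
        ring
      simp only [ContinuousLinearMap.smul_apply, smul_eq_mul]
      rw [hpow, hp', hq', hr', hs', ha']
    -- sum over the basis
    unfold divg
    have hsum : ∀ i : Fin d, fderiv ℝ (fun y => ⟪F y, EuclideanSpace.single i (1:ℝ)⟫) x
          (EuclideanSpace.single i (1:ℝ))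
        = ((d:ℝ)-2) * (⟪g x, EuclideanSpace.single i (1:ℝ)⟫ * (g x) i)
          + (((d:ℝ)-2) * φ x) * f'' (EuclideanSpace.single i (1:ℝ))
              (EuclideanSpace.single i (1:ℝ))
          + ((2 * En * φ x) * (⟪g x, EuclideanSpace.single i (1:ℝ)⟫ * x i)
              - 2 * ((f''.flip (g x)) (EuclideanSpace.single i (1:ℝ)) * x i)
            + (En * (φ x)^2 - ⟪g x, g x⟫)
            + (2 * (⟪g x, EuclideanSpace.single i (1:ℝ)⟫ * (g x) i)
                + 2 * ((f''.flip x) (EuclideanSpace.single i (1:ℝ)) * (g x) i)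
              + (2 * ⟪x, g x⟫) * f'' (EuclideanSpace.single i (1:ℝ))
                  (EuclideanSpace.single i (1:ℝ)))) := by
      intro i
      rw [hmain]
      have h1 : ⟪EuclideanSpace.single i (1:ℝ), EuclideanSpace.single i (1:ℝ)⟫ = (1:ℝ) := by
        simp [EuclideanSpace.inner_single_right, EuclideanSpace.single_apply]
      have h2 : ∀ w : EuclideanSpace ℝ (Fin d), ⟪w, EuclideanSpace.single i (1:ℝ)⟫ = w i := by
        intro w; simp [EuclideanSpace.inner_single_right]
      have h3 : ∀ w : EuclideanSpace ℝ (Fin d), ⟪EuclideanSpace.single i (1:ℝ), w⟫ = w i := by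
        intro w; simp [EuclideanSpace.inner_single_left]
      rw [h1]
      rw [h2 (g x), h2 x, h3 (g x)]
      simp only [ContinuousLinearMap.flip_apply]
      ring
    rw [Finset.sum_congr rfl (fun i _ => hsum i)]
    rw [Finset.sum_add_distrib, Finset.sum_add_distrib, Finset.sum_add_distrib,
      Finset.sum_add_distrib, Finset.sum_sub_distrib, Finset.sum_add_distrib,
      Finset.sum_add_distrib]
    rw [← Finset.mul_sum, ← Finset.mul_sum, ← Finset.mul_sum, ← Finset.mul_sum,
      ← Finset.mul_sum, ← Finset.mul_sum, ← Finset.mul_sum]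
    rw [eucl_sum_inner_mul (g x) (g x), eucl_sum_inner_mul (g x) x,
      eucl_sum_apply_mul (f''.flip (g x)) x, eucl_sum_apply_mul (f''.flip x) (g x),
      hlapval, Finset.sum_const, Finset.card_univ, Fintype.card_fin]
    simp only [ContinuousLinearMap.flip_apply]
    rw [hsymm x (g x), real_inner_comm (g x) x]
    have hgg : ⟪g x, g x⟫ = ⟪g x, g x⟫ := rfl
    push_cast
    ring
  -- the boundary integrand
  have hbnd : ∀ x : EuclideanSpace ℝ (Fin d),
      ((d : ℝ) - 2) * φ x * ⟪n x, gradient φ x⟫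
        + ⟪x, n x⟫ * (En * (φ x) ^ 2 - ‖gradient φ x‖ ^ 2)
        + 2 * ⟪x, gradient φ x⟫ * ⟪n x, gradient φ x⟫ = ⟪F x, n x⟫ := by
    intro x
    rw [hFdef]
    simp only [inner_add_left, real_inner_smul_left]
    rw [real_inner_self_eq_norm_sq (gradient φ x)]
    rw [real_inner_comm (n x) (gradient φ x)]
    ring
  -- putting everything together
  calc (∫ x in frontier Ω,
        (((d : ℝ) - 2) * φ x * ⟪n x, gradient φ x⟫
          + ⟪x, n x⟫ * (En * (φ x) ^ 2 - ‖gradient φ x‖ ^ 2)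
          + 2 * ⟪x, gradient φ x⟫ * ⟪n x, gradient φ x⟫) ∂(μH[(d:ℝ) - 1]))
      = ∫ x in frontier Ω, ⟪F x, n x⟫ ∂(μH[(d:ℝ) - 1]) := by
        exact integral_congr_ae (Filter.Eventually.of_forall fun x => hbnd x)
    _ = ∫ x in Ω, divg F x := (hGG F ⟨U, hUo, hUsub, hFU⟩).symm
    _ = ∫ x in Ω, (2 * En) * (φ x)^2 := by
        exact setIntegral_congr_fun hΩo.measurableSet fun x hx => hdiv x hx
    _ = (2 * En) * ∫ x in Ω, (φ x)^2 := integral_const_mul _ _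
    _ = 2 * En := by rw [hφnorm, mul_one]
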